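/- Let (U_i)_{i∈I} and (V_i)_{i∈I} be two families of measurable subsets of X over the same countable index set, with 0 < μ(V_i) < ∞ and μ(U_i) < ∞, such that every x ∈ X lies in at most N of the sets U_i and in at most N' of the sets V_i. Suppose there are constants C₁ > 0 and C' with C₁ μ(U_i) ≤ μ(V_i) for all i, and sup_{x∈U_i} sup_{y∈V_i} m(x,y) ≤ C' for all i. Define L(x,y) = Σ_{j∈I} χ_{U_j}(x) χ_{V_j}(y) μ(V_j)^{-1}. Then: (1) for all x ∈ X, ∫_X L(x,y) m(x,y) dμ(y) ≤ C' N; and (2) for all y ∈ X, ∫_X L(x,y) m(x,y) dμ(x) ≤ C' C₁^{-1} N'. (Kernel estimates from the proof of Lemma 5.3.) -/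

import Mathlib

open MeasureTheory
open scoped ENNReal NNReal

lemma aux_tsum_indicator_le {X : Type*} {I : Type*} [Countable I] (U : I → Set X)
    (x : X) (c : ℝ≥0∞) (N : ℕ) (hN : {i : I | x ∈ U i}.encard ≤ N) :
    ∑' j, (U j).indicator (fun _ => (1 : ℝ≥0∞)) x * c ≤ c * N := by
  have h1 : ∀ j : I, (U j).indicator (fun _ => (1 : ℝ≥0∞)) x
      = {i : I | x ∈ U i}.indicator (fun _ => (1 : ℝ≥0∞)) j := by
    intro j
    by_cases h : x ∈ U j <;> simp [Set.indicator, h]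
  simp_rw [h1]
  rw [ENNReal.tsum_mul_right, ← tsum_subtype, ENNReal.tsum_set_one]
  rw [mul_comm]
  gcongr
  exact le_trans (ENat.toENNReal_le.mpr hN) (by simp)

theorem stmt_6
    {X : Type*} [MeasurableSpace X] (μ : Measure X)
    {I : Type*} [Countable I] (U V : I → Set X)
    (hUmeas : ∀ i, MeasurableSet (U i)) (hVmeas : ∀ i, MeasurableSet (V i))
    (hVpos : ∀ i, 0 < μ (V i)) (hVfin : ∀ i, μ (V i) < ∞) (hUfin : ∀ i, μ (U i) < ∞)
    (N N' : ℕ)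
    (hNU : ∀ x : X, {i : I | x ∈ U i}.encard ≤ N)
    (hNV : ∀ x : X, {i : I | x ∈ V i}.encard ≤ N')
    (m : X → X → ℝ) (hm1 : ∀ x y, 1 ≤ m x y) (hmsymm : ∀ x y, m x y = m y x)
    (hmsub : ∀ x y z, m x y ≤ m x z * m z y) (hmmeas : Measurable (Function.uncurry m))
    (C₁ : ℝ≥0∞) (hC₁ : 0 < C₁) (hμUV : ∀ i, C₁ * μ (U i) ≤ μ (V i))
    (C' : ℝ) (hC' : ∀ i, ∀ x ∈ U i, ∀ y ∈ V i, m x y ≤ C') :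
    (∀ x : X,
      ∫⁻ y, (∑' j, (U j).indicator (fun _ => (1 : ℝ≥0∞)) x
          * (V j).indicator (fun _ => (1 : ℝ≥0∞)) y * (μ (V j))⁻¹)
          * ENNReal.ofReal (m x y) ∂μ
        ≤ ENNReal.ofReal C' * N)
    ∧
    (∀ y : X,
      ∫⁻ x, (∑' j, (U j).indicator (fun _ => (1 : ℝ≥0∞)) x
          * (V j).indicator (fun _ => (1 : ℝ≥0∞)) y * (μ (V j))⁻¹)
          * ENNReal.ofReal (m x y) ∂μ
        ≤ ENNReal.ofReal C' * C₁⁻¹ * N') := by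
  have hmx : ∀ x : X, Measurable (fun y => ENNReal.ofReal (m x y)) := by
    intro x
    exact (hmmeas.comp (measurable_prodMk_left)).ennreal_ofReal
  have hmy : ∀ y : X, Measurable (fun x => ENNReal.ofReal (m x y)) := by
    intro y
    exact (hmmeas.comp (measurable_prodMk_right)).ennreal_ofReal
  constructor
  · intro x
    calc ∫⁻ y, (∑' j, (U j).indicator (fun _ => (1 : ℝ≥0∞)) x
          * (V j).indicator (fun _ => (1 : ℝ≥0∞)) y * (μ (V j))⁻¹)
          * ENNReal.ofReal (m x y) ∂μ
        = ∑' j, ∫⁻ y, (U j).indicator (fun _ => (1 : ℝ≥0∞)) x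
          * (V j).indicator (fun _ => (1 : ℝ≥0∞)) y * (μ (V j))⁻¹
          * ENNReal.ofReal (m x y) ∂μ := by
          simp_rw [← ENNReal.tsum_mul_right]
          refine lintegral_tsum fun j => ?_
          exact ((((measurable_const.indicator (hVmeas j)).const_mul _).mul_const _).mul
            (hmx x)).aemeasurable
      _ ≤ ∑' j, (U j).indicator (fun _ => (1 : ℝ≥0∞)) x * ENNReal.ofReal C' := by
          refine ENNReal.tsum_le_tsum fun j => ?_
          by_cases hx : x ∈ U j
          · simp only [Set.indicator_of_mem hx, one_mul]
            have : ∀ y, (V j).indicator (fun _ => (1 : ℝ≥0∞)) y * (μ (V j))⁻¹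
                * ENNReal.ofReal (m x y)
                = (V j).indicator (fun y => (μ (V j))⁻¹ * ENNReal.ofReal (m x y)) y := by
              intro y
              by_cases hy : y ∈ V j <;>
                simp [Set.indicator_of_mem, Set.indicator_of_notMem, hy, mul_comm]
            simp_rw [this]
            rw [lintegral_indicator (hVmeas j)]
            calc ∫⁻ y in V j, (μ (V j))⁻¹ * ENNReal.ofReal (m x y) ∂μ
                ≤ ∫⁻ _ in V j, (μ (V j))⁻¹ * ENNReal.ofReal C' ∂μ := by
                  refine setLIntegral_mono measurable_const fun y hy => ?_
                  gcongr
                  exact hC' j x hx y hy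
              _ = (μ (V j))⁻¹ * ENNReal.ofReal C' * μ (V j) := by
                  rw [setLIntegral_const]
              _ = ENNReal.ofReal C' := by
                  rw [mul_comm _ (ENNReal.ofReal C'), mul_assoc,
                    ENNReal.inv_mul_cancel (hVpos j).ne' (hVfin j).ne, mul_one]
          · simp [Set.indicator_of_notMem hx]
      _ ≤ ENNReal.ofReal C' * N := aux_tsum_indicator_le U x _ N (hNU x)
  · intro y
    calc ∫⁻ x, (∑' j, (U j).indicator (fun _ => (1 : ℝ≥0∞)) x
          * (V j).indicator (fun _ => (1 : ℝ≥0∞)) y * (μ (V j))⁻¹)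
          * ENNReal.ofReal (m x y) ∂μ
        = ∑' j, ∫⁻ x, (U j).indicator (fun _ => (1 : ℝ≥0∞)) x
          * (V j).indicator (fun _ => (1 : ℝ≥0∞)) y * (μ (V j))⁻¹
          * ENNReal.ofReal (m x y) ∂μ := by
          simp_rw [← ENNReal.tsum_mul_right]
          refine lintegral_tsum fun j => ?_
          exact ((((measurable_const.indicator (hUmeas j)).mul_const _).mul_const _).mul
            (hmy y)).aemeasurable
      _ ≤ ∑' j, (V j).indicator (fun _ => (1 : ℝ≥0∞)) y * (ENNReal.ofReal C' * C₁⁻¹) := by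
          refine ENNReal.tsum_le_tsum fun j => ?_
          by_cases hy : y ∈ V j
          · simp only [Set.indicator_of_mem hy, one_mul, mul_one]
            have : ∀ x, (U j).indicator (fun _ => (1 : ℝ≥0∞)) x * (μ (V j))⁻¹
                * ENNReal.ofReal (m x y)
                = (U j).indicator (fun x => (μ (V j))⁻¹ * ENNReal.ofReal (m x y)) x := by
              intro x
              by_cases hx : x ∈ U j <;>
                simp [Set.indicator_of_mem, Set.indicator_of_notMem, hx, mul_comm]
            simp_rw [this]
            rw [lintegral_indicator (hUmeas j)]
            have hμU : μ (U j) ≤ C₁⁻¹ * μ (V j) := by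
              by_cases h0 : μ (U j) = 0
              · simp [h0]
              have hC₁top : C₁ ≠ ⊤ := by
                intro h
                have := hμUV j
                rw [h, ENNReal.top_mul h0] at this
                exact (hVfin j).ne (top_le_iff.mp this)
              calc μ (U j) = C₁⁻¹ * (C₁ * μ (U j)) := by
                    rw [← mul_assoc, ENNReal.inv_mul_cancel hC₁.ne' hC₁top, one_mul]
                _ ≤ C₁⁻¹ * μ (V j) := by gcongr; exact hμUV j
            calc ∫⁻ x in U j, (μ (V j))⁻¹ * ENNReal.ofReal (m x y) ∂μ
                ≤ ∫⁻ _ in U j, (μ (V j))⁻¹ * ENNReal.ofReal C' ∂μ := by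
                  refine setLIntegral_mono measurable_const fun x hx => ?_
                  gcongr
                  exact hC' j x hx y hy
              _ = (μ (V j))⁻¹ * ENNReal.ofReal C' * μ (U j) := by
                  rw [setLIntegral_const]
              _ ≤ (μ (V j))⁻¹ * ENNReal.ofReal C' * (C₁⁻¹ * μ (V j)) := by gcongr
              _ = ENNReal.ofReal C' * C₁⁻¹ := by
                  rw [mul_comm (C₁⁻¹) (μ (V j))]
                  rw [mul_comm ((μ (V j))⁻¹) _, mul_assoc, ← mul_assoc ((μ (V j))⁻¹),
                    ENNReal.inv_mul_cancel (hVpos j).ne' (hVfin j).ne, one_mul]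
          · simp [Set.indicator_of_notMem hy]
      _ ≤ ENNReal.ofReal C' * C₁⁻¹ * N' := aux_tsum_indicator_le V y _ N' (hNV y)
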